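/- Let D be a derivation of a commutative Q-algebra A and suppose x ∈ A satisfies: D^k(x) is given and D is locally nilpotent on x (D^{n+1}(x) = 0 for some n). If 𝔅 is the derivation on Q[t_0, t_1, …, t_n] defined by 𝔅(t_j) = Σ_{l≥1} c_l t_{j−(2l−1)} (with t_j = 0 for j < 0) for constants c_l, then exp(𝔅)(t_n) = Σ_{i=0}^{n} r_i t_{n−i}, where Σ_{i≥0} r_i z^{−i} = exp(Σ_{l≥1} c_l z^{−(2l−1)}). -/
import Mathlib


/-- `r_i` for constants `c_l`: `r_0 = 1` and for `i ≥ 1`,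
`r_i = ∑_{m≥1} (1/m!) ∑_{l_1,…,l_m ≥ 1, ∑_j (2l_j − 1) = i} ∏_j c_{l_j}`,
so that `∑_i r_i z^{-i} = exp(∑_{l≥1} c_l z^{−(2l−1)})`. -/
noncomputable def rcoef (c : ℕ → ℚ) (i : ℕ) : ℚ :=
  if i = 0 then 1 else
    ∑ m ∈ Finset.Icc 1 i, (m.factorial : ℚ)⁻¹ •
      ∑ l ∈ Fintype.piFinset (fun _ : Fin m => Finset.Icc 1 i),
        (if (∑ j, (2 * l j - 1)) = i then ∏ j, c (l j) else 0)

/-- The lowering derivation `𝔅` of `ℚ[t_0, t_1, …]` defined on generators by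
`𝔅(t_j) = ∑_{l≥1, 2l−1 ≤ j} c_l t_{j−(2l−1)}` (with `t_j = 0` for `j < 0`). -/
noncomputable def lowDer (c : ℕ → ℚ) :
    Derivation ℚ (MvPolynomial ℕ ℚ) (MvPolynomial ℕ ℚ) :=
  MvPolynomial.mkDerivation ℚ fun j : ℕ =>
    ∑ l ∈ Finset.Icc 1 j,
      if 2 * l - 1 ≤ j then c l • MvPolynomial.X (j - (2 * l - 1)) else 0

/-- Convolution powers of the generating coefficients. -/
noncomputable def bcoef (c : ℕ → ℚ) : ℕ → ℕ → ℚ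
  | 0, i => if i = 0 then 1 else 0
  | (k+1), i => ∑ l ∈ Finset.Icc 1 i,
      if 2 * l - 1 ≤ i then c l * bcoef c k (i - (2 * l - 1)) else 0

lemma lowDer_X (c : ℕ → ℚ) (j : ℕ) :
    lowDer c (MvPolynomial.X j) =
      ∑ l ∈ Finset.Icc 1 j,
        if 2 * l - 1 ≤ j then c l • MvPolynomial.X (j - (2 * l - 1)) else 0 := by
  simp [lowDer, MvPolynomial.mkDerivation_X]

lemma lowDer_pow (c : ℕ → ℚ) : ∀ (k j : ℕ),
    ((lowDer c).toLinearMap ^ k) (MvPolynomial.X j)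
      = ∑ i ∈ Finset.range (j + 1), bcoef c k i • MvPolynomial.X (j - i) := by
  intro k
  induction k with
  | zero =>
    intro j
    rw [pow_zero, Module.End.one_apply]
    rw [Finset.sum_eq_single 0]
    · simp [bcoef]
    · intro b _ hb
      simp [bcoef, hb]
    · intro h
      exact absurd (Finset.mem_range.2 (Nat.succ_pos j)) h
  | succ k ih =>
    intro j
    rw [pow_succ, Module.End.mul_apply]
    have : (lowDer c).toLinearMap (MvPolynomial.X j) = lowDer c (MvPolynomial.X j) := rfl
    rw [this, lowDer_X, map_sum]
    have lhs_eq : ∀ l ∈ Finset.Icc 1 j,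
        ((lowDer c).toLinearMap ^ k)
            (if 2 * l - 1 ≤ j then c l • MvPolynomial.X (j - (2 * l - 1)) else 0)
          = if 2 * l - 1 ≤ j then
              ∑ i' ∈ Finset.range (j - (2 * l - 1) + 1),
                (c l * bcoef c k i') • MvPolynomial.X (j - (2 * l - 1) - i') else 0 := by
      intro l _
      split
      · rw [map_smul, ih, Finset.smul_sum]
        simp_rw [smul_smul]
      · simp
    rw [Finset.sum_congr rfl lhs_eq]
    -- turn ite-sums into filtered sums on both sides
    rw [← Finset.sum_filter]
    have rhs_eq : ∀ i ∈ Finset.range (j + 1),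
        bcoef c (k + 1) i • (MvPolynomial.X (j - i) : MvPolynomial ℕ ℚ)
          = ∑ l ∈ (Finset.Icc 1 i).filter (fun l => 2 * l - 1 ≤ i),
              (c l * bcoef c k (i - (2 * l - 1))) • MvPolynomial.X (j - i) := by
      intro i _
      rw [show bcoef c (k+1) i = ∑ l ∈ Finset.Icc 1 i,
            if 2 * l - 1 ≤ i then c l * bcoef c k (i - (2 * l - 1)) else 0 from rfl,
          ← Finset.sum_filter, Finset.sum_smul]
    rw [Finset.sum_congr rfl rhs_eq]
    rw [Finset.sum_sigma', Finset.sum_sigma']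
    refine Finset.sum_bij'
      (fun p _ => (⟨2 * p.1 - 1 + p.2, p.1⟩ : Σ _ : ℕ, ℕ))
      (fun p _ => (⟨p.2, p.1 - (2 * p.2 - 1)⟩ : Σ _ : ℕ, ℕ)) ?_ ?_ ?_ ?_ ?_
    · rintro ⟨l, i'⟩ hp
      simp only [Finset.mem_sigma, Finset.mem_filter, Finset.mem_Icc, Finset.mem_range] at hp ⊢
      omega
    · rintro ⟨i, l⟩ hp
      simp only [Finset.mem_sigma, Finset.mem_filter, Finset.mem_Icc, Finset.mem_range] at hp ⊢
      omega
    · rintro ⟨l, i'⟩ hp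
      simp only [Finset.mem_sigma, Finset.mem_filter, Finset.mem_Icc, Finset.mem_range] at hp
      have : 2 * l - 1 + i' - (2 * l - 1) = i' := by omega
      simp [this]
    · rintro ⟨i, l⟩ hp
      simp only [Finset.mem_sigma, Finset.mem_filter, Finset.mem_Icc, Finset.mem_range] at hp
      have : 2 * l - 1 + (i - (2 * l - 1)) = i := by omega
      simp [this]
    · rintro ⟨l, i'⟩ hp
      simp only [Finset.mem_sigma, Finset.mem_filter, Finset.mem_Icc, Finset.mem_range] at hp
      have h1 : 2 * l - 1 + i' - (2 * l - 1) = i' := by omega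
      have h2 : j - (2 * l - 1) - i' = j - (2 * l - 1 + i') := by omega
      simp [h1, h2]

lemma sum_piFinset_succ {M : Type*} [AddCommMonoid M] (k : ℕ) (s : Finset ℕ)
    (f : (Fin (k + 1) → ℕ) → M) :
    ∑ v ∈ Fintype.piFinset (fun _ : Fin (k + 1) => s), f v
      = ∑ x ∈ s, ∑ g ∈ Fintype.piFinset (fun _ : Fin k => s), f (Fin.cons x g) := by
  rw [← Finset.sum_product']
  refine Finset.sum_bij'
    (fun v _ => (v 0, Fin.tail v))
    (fun p _ => Fin.cons p.1 p.2) ?_ ?_ ?_ ?_ ?_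
  · intro v hv
    simp only [Fintype.mem_piFinset] at hv
    simp only [Finset.mem_product, Fintype.mem_piFinset]
    exact ⟨hv 0, fun i => hv i.succ⟩
  · intro p hp
    simp only [Finset.mem_product, Fintype.mem_piFinset] at hp
    simp only [Fintype.mem_piFinset]
    intro i
    refine Fin.cases ?_ ?_ i
    · simpa using hp.1
    · intro i'; simpa using hp.2 i'
  · intro v _
    exact Fin.cons_self_tail v
  · intro p _
    simp
  · intro v _
    rw [Fin.cons_self_tail]

lemma bcoef_eq_tuple (c : ℕ → ℚ) : ∀ (k i N : ℕ), i ≤ N →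
    bcoef c k i = ∑ l ∈ Fintype.piFinset (fun _ : Fin k => Finset.Icc 1 N),
      (if (∑ j, (2 * l j - 1)) = i then ∏ j, c (l j) else 0) := by
  intro k
  induction k with
  | zero =>
    intro i N _
    simp [bcoef, eq_comm]
  | succ k ih =>
    intro i N hiN
    rw [sum_piFinset_succ]
    have inner : ∀ x ∈ Finset.Icc 1 N,
        (∑ g ∈ Fintype.piFinset (fun _ : Fin k => Finset.Icc 1 N),
          (if (∑ j, (2 * (Fin.cons x g : Fin (k+1) → ℕ) j - 1)) = i then
            ∏ j, c ((Fin.cons x g : Fin (k+1) → ℕ) j) else 0))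
        = if 2 * x - 1 ≤ i then c x * bcoef c k (i - (2 * x - 1)) else 0 := by
      intro x hx
      have hx1 : 1 ≤ x := (Finset.mem_Icc.1 hx).1
      simp only [Fin.sum_univ_succ, Fin.prod_univ_succ, Fin.cons_zero, Fin.cons_succ]
      by_cases hc : 2 * x - 1 ≤ i
      · rw [if_pos hc]
        have key : ∀ g : Fin k → ℕ,
            ((2 * x - 1) + ∑ j : Fin k, (2 * g j - 1) = i)
              ↔ (∑ j : Fin k, (2 * g j - 1) = i - (2 * x - 1)) := by
          intro g; omega
        have : ∀ g ∈ Fintype.piFinset (fun _ : Fin k => Finset.Icc 1 N),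
            (if (2 * x - 1) + ∑ j : Fin k, (2 * g j - 1) = i then
              c x * ∏ j, c (g j) else 0)
            = c x * (if (∑ j : Fin k, (2 * g j - 1)) = i - (2 * x - 1) then
                ∏ j, c (g j) else 0) := by
          intro g _
          simp only [key g]
          rw [mul_ite, mul_zero]
        rw [Finset.sum_congr rfl this, ← Finset.mul_sum,
          ← ih (i - (2 * x - 1)) N (le_trans (Nat.sub_le _ _) hiN)]
      · rw [if_neg hc]
        refine Finset.sum_eq_zero ?_
        intro g _
        rw [if_neg]
        omega
    rw [Finset.sum_congr rfl inner]
    rw [show bcoef c (k+1) i = ∑ l ∈ Finset.Icc 1 i,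
          if 2 * l - 1 ≤ i then c l * bcoef c k (i - (2 * l - 1)) else 0 from rfl]
    refine Finset.sum_subset ?_ ?_
    · intro x hx
      simp only [Finset.mem_Icc] at hx ⊢
      omega
    · intro x hxN hxi
      simp only [Finset.mem_Icc] at hxN hxi
      rw [if_neg]
      omega

lemma bcoef_zero_of_lt (c : ℕ → ℚ) (k i : ℕ) (h : i < k) : bcoef c k i = 0 := by
  rw [bcoef_eq_tuple c k i i le_rfl]
  refine Finset.sum_eq_zero ?_
  intro l hl
  simp only [Fintype.mem_piFinset, Finset.mem_Icc] at hl
  rw [if_neg]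
  have hk : (k : ℕ) = ∑ _j : Fin k, 1 := by simp
  have : (∑ _j : Fin k, 1) ≤ ∑ j, (2 * l j - 1) := by
    refine Finset.sum_le_sum ?_
    intro j _
    have := (hl j).1
    omega
  omega

lemma rcoef_eq (c : ℕ → ℚ) (n i : ℕ) (hi : i ≤ n) :
    rcoef c i = ∑ k ∈ Finset.range (n + 1), (k.factorial : ℚ)⁻¹ * bcoef c k i := by
  rcases Nat.eq_zero_or_pos i with rfl | hpos
  · rw [rcoef, if_pos rfl, Finset.sum_eq_single 0]
    · simp [bcoef]
    · intro k _ hk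
      rw [bcoef_zero_of_lt c k 0 (Nat.pos_of_ne_zero hk), mul_zero]
    · intro h
      exact absurd (Finset.mem_range.2 (Nat.succ_pos n)) h
  · rw [rcoef, if_neg (Nat.pos_iff_ne_zero.1 hpos)]
    have : ∀ m ∈ Finset.Icc 1 i,
        (m.factorial : ℚ)⁻¹ •
          (∑ l ∈ Fintype.piFinset (fun _ : Fin m => Finset.Icc 1 i),
            (if (∑ j, (2 * l j - 1)) = i then ∏ j, c (l j) else 0))
          = (m.factorial : ℚ)⁻¹ * bcoef c m i := by
      intro m _
      rw [← bcoef_eq_tuple c m i i le_rfl, smul_eq_mul]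
    rw [Finset.sum_congr rfl this]
    refine Finset.sum_subset ?_ ?_
    · intro k hk
      simp only [Finset.mem_Icc] at hk
      exact Finset.mem_range.2 (by omega)
    · intro k _ hk
      simp only [Finset.mem_Icc] at hk
      rcases Nat.eq_zero_or_pos k with rfl | hkpos
      · have h0 : bcoef c 0 i = 0 := by
          rw [show bcoef c 0 i = if i = 0 then 1 else 0 from rfl, if_neg (by omega)]
        rw [h0, mul_zero]
      · rw [bcoef_zero_of_lt c k i (by omega), mul_zero]

/-- `exp(𝔅)(t_n) = ∑_{i=0}^{n} r_i t_{n−i}`; since `𝔅` strictly lowers indices,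
only the terms `k ≤ n` of the Taylor expansion of `exp` contribute. -/
theorem stmt9 (c : ℕ → ℚ) (n : ℕ) :
    ∑ k ∈ Finset.range (n + 1),
      (k.factorial : ℚ)⁻¹ • ((lowDer c).toLinearMap ^ k) (MvPolynomial.X n) =
    ∑ i ∈ Finset.range (n + 1),
      MvPolynomial.C (rcoef c i) * MvPolynomial.X (n - i) := by
  have step1 : ∀ k ∈ Finset.range (n + 1),
      (k.factorial : ℚ)⁻¹ • ((lowDer c).toLinearMap ^ k) (MvPolynomial.X n)
        = ∑ i ∈ Finset.range (n + 1),
            ((k.factorial : ℚ)⁻¹ * bcoef c k i) • MvPolynomial.X (n - i) := by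
    intro k _
    rw [lowDer_pow c k n, Finset.smul_sum]
    simp_rw [smul_smul]
  rw [Finset.sum_congr rfl step1, Finset.sum_comm]
  refine Finset.sum_congr rfl ?_
  intro i hi
  rw [← Finset.sum_smul, ← rcoef_eq c n i (Nat.lt_succ_iff.1 (Finset.mem_range.1 hi)),
    MvPolynomial.smul_eq_C_mul]
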